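/- Barrier strict supersolution: let g: [0,∞) → [0,∞) be a nondecreasing C¹ function vanishing on [0, γ₂/β₁] and positive on (γ₂/β₁, ∞), and define w(x,y,t) = (μ₀/2)t + x + y + g(x)/(y - μ₀) for x ≥ 0, y > μ₀, t ≥ 0. Then w satisfies -∂_t w + w + β(t)xy ∂_x w + (γ(t) - β(t)x) y ∂_y w > 0 at every point of (γ₂/β₁, ∞) × (μ₀, ∞) × (0, ∞), for any β(t) ∈ [β₁, β₂] and γ(t) ∈ [γ₁, γ₂] with all constants positive. -/

import Mathlib

/-- The barrier `w(x,y,t) = (μ₀/2) t + x + y + g(x)/(y - μ₀)` is a strict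
supersolution of the transformed equation on `(γ₂/β₁, ∞) × (μ₀, ∞) × (0, ∞)`. -/
theorem sir_barrier_strict_supersolution
    (β₁ β₂ γ₁ γ₂ μ₀ : ℝ)
    (hβ₁ : 0 < β₁) (hβ₁₂ : β₁ ≤ β₂) (hγ₁ : 0 < γ₁) (hγ₁₂ : γ₁ ≤ γ₂) (hμ₀ : 0 < μ₀)
    (g : ℝ → ℝ) (hg : ContDiff ℝ 1 g) (hgmono : Monotone g)
    (hgnonneg : ∀ x ≥ (0:ℝ), 0 ≤ g x)
    (hg0 : ∀ x ∈ Set.Icc (0:ℝ) (γ₂ / β₁), g x = 0)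
    (hgpos : ∀ x > γ₂ / β₁, 0 < g x) :
    ∀ x > γ₂ / β₁, ∀ y > μ₀, ∀ t > (0:ℝ),
      ∀ b ∈ Set.Icc β₁ β₂, ∀ c ∈ Set.Icc γ₁ γ₂,
        -- -∂ₜw + w + b·x·y·∂ₓw + (c - b·x)·y·∂_y w > 0, with
        -- ∂ₜw = μ₀/2, ∂ₓw = 1 + g'(x)/(y-μ₀), ∂_yw = 1 - g(x)/(y-μ₀)²
        0 < -(μ₀ / 2) + (μ₀ / 2 * t + x + y + g x / (y - μ₀)) +
            b * x * y * (1 + deriv g x / (y - μ₀)) +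
            (c - b * x) * y * (1 - g x / (y - μ₀) ^ 2) := by
  intro x hx y hy t ht b hb c hc
  obtain ⟨hb1, hb2⟩ := hb
  obtain ⟨hc1, hc2⟩ := hc
  have hγ₂ : 0 < γ₂ := lt_of_lt_of_le hγ₁ hγ₁₂
  have hx0 : 0 < x := lt_trans (div_pos hγ₂ hβ₁) hx
  have hy0 : 0 < y := lt_trans hμ₀ hy
  have hd : 0 < y - μ₀ := sub_pos.mpr hy
  have hgx : 0 < g x := hgpos x hx
  have hg' : 0 ≤ deriv g x := by
    have hdiff : HasDerivAt g (deriv g x) x := ((hg.differentiable one_ne_zero) x).hasDerivAt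
    have hsl : Filter.Tendsto (slope g x) (nhdsWithin x (Set.Ioi x)) (nhds (deriv g x)) :=
      (hasDerivAt_iff_tendsto_slope.mp hdiff).mono_left
        (nhdsWithin_mono x (fun z hz => Set.mem_compl_singleton_iff.mpr (ne_of_gt hz)))
    refine ge_of_tendsto hsl ?_
    filter_upwards [self_mem_nhdsWithin] with z hz
    have hxz : x < z := hz
    simp only [slope_def_field, div_eq_mul_inv]
    exact mul_nonneg (sub_nonneg.mpr (hgmono hxz.le)) (inv_nonneg.mpr (sub_nonneg.mpr hxz.le))
  have hb0 : 0 < b := lt_of_lt_of_le hβ₁ hb1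
  have hc0 : 0 < c := lt_of_lt_of_le hγ₁ hc1
  -- c - b*x < 0
  have hcbx : c - b * x < 0 := by
    have h1 : γ₂ < β₁ * x := by
      have := (div_lt_iff₀ hβ₁).mp hx; linarith
    nlinarith [mul_le_mul_of_nonneg_right hb1 hx0.le]
  have h1 : 0 ≤ g x / (y - μ₀) := div_nonneg hgx.le hd.le
  have h2 : 0 ≤ b * x * y * (deriv g x / (y - μ₀)) := by positivity
  have h3 : 0 ≤ (b * x - c) * y * (g x / (y - μ₀) ^ 2) := by
    apply mul_nonneg (mul_nonneg (by linarith) hy0.le)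
    positivity
  have hexp : -(μ₀ / 2) + (μ₀ / 2 * t + x + y + g x / (y - μ₀)) +
      b * x * y * (1 + deriv g x / (y - μ₀)) +
      (c - b * x) * y * (1 - g x / (y - μ₀) ^ 2)
      = -(μ₀ / 2) + μ₀ / 2 * t + x + y + g x / (y - μ₀)
        + b * x * y * (deriv g x / (y - μ₀)) + c * y
        + (b * x - c) * y * (g x / (y - μ₀) ^ 2) := by ring
  rw [hexp]
  have hcy : 0 < c * y := mul_pos hc0 hy0
  have hμt : 0 < μ₀ / 2 * t := by positivity
  nlinarith
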